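/- For all J > 0 and h ∈ ℝ, every maximizer m* of the function m ↦ p̃(m,h,J) = −J m² + J/2 + p((2m−1)J + h) over ℝ lies in the open interval (0,1) and satisfies the consistency equation m* = g((2m*−1)J + h), where p′ = g and g(ξ) = (√(e^{4ξ}+4e^{2ξ}) − e^{2ξ})/2. -/

import Mathlib

noncomputable def gH (h : ℝ) : ℝ :=
  (Real.sqrt (Real.exp (4 * h) + 4 * Real.exp (2 * h)) - Real.exp (2 * h)) / 2

noncomputable def pH (h : ℝ) : ℝ :=
  -(1 - gH h) / 2 - (1 / 2) * Real.log (1 - gH h)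

/-- The variational functional `p̃(m,h,J) = −J m² + J/2 + p((2m−1)J + h)`. -/
noncomputable def pTilde (m h J : ℝ) : ℝ :=
  -J * m ^ 2 + J / 2 + pH ((2 * m - 1) * J + h)

lemma sqrt_sq_eq (x : ℝ) :
    Real.sqrt (Real.exp (4 * x) + 4 * Real.exp (2 * x)) ^ 2
      = Real.exp (4 * x) + 4 * Real.exp (2 * x) :=
  Real.sq_sqrt (by positivity)

lemma sqrt_pos' (x : ℝ) : 0 < Real.sqrt (Real.exp (4 * x) + 4 * Real.exp (2 * x)) :=
  Real.sqrt_pos.mpr (by positivity)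

lemma exp4 (x : ℝ) : Real.exp (4 * x) = Real.exp (2 * x) ^ 2 := by
  rw [← Real.exp_nat_mul]; ring_nf

lemma gH_pos (x : ℝ) : 0 < gH x := by
  have h1 : Real.exp (2 * x) < Real.sqrt (Real.exp (4 * x) + 4 * Real.exp (2 * x)) := by
    rw [Real.lt_sqrt (Real.exp_nonneg _)]
    nlinarith [Real.exp_pos (2 * x), exp4 x]
  unfold gH; linarith

lemma gH_lt_one (x : ℝ) : gH x < 1 := by
  have h1 : Real.sqrt (Real.exp (4 * x) + 4 * Real.exp (2 * x)) < Real.exp (2 * x) + 2 := by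
    rw [Real.sqrt_lt' (by positivity)]
    nlinarith [exp4 x]
  unfold gH; linarith

lemma sqrt_eq_gH (x : ℝ) :
    Real.sqrt (Real.exp (4 * x) + 4 * Real.exp (2 * x)) = 2 * gH x + Real.exp (2 * x) := by
  unfold gH; ring

lemma gH_quadratic (x : ℝ) : (gH x) ^ 2 = Real.exp (2 * x) * (1 - gH x) := by
  have hs := sqrt_sq_eq x
  rw [sqrt_eq_gH, exp4] at hs
  nlinarith [hs]

lemma hasDerivAt_gH (x : ℝ) :
    HasDerivAt gH
      (((4 * Real.exp (4 * x) + 8 * Real.exp (2 * x)) /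
          (2 * Real.sqrt (Real.exp (4 * x) + 4 * Real.exp (2 * x)))
        - 2 * Real.exp (2 * x)) / 2) x := by
  have h1 : HasDerivAt (fun y => Real.exp (4 * y) + 4 * Real.exp (2 * y))
      (4 * Real.exp (4 * x) + 8 * Real.exp (2 * x)) x := by
    have e1 : HasDerivAt (fun y : ℝ => Real.exp (4 * y)) (Real.exp (4 * x) * 4) x :=
      (Real.hasDerivAt_exp (4 * x)).comp x (by simpa using (hasDerivAt_id x).const_mul (4:ℝ))
    have e2 : HasDerivAt (fun y : ℝ => Real.exp (2 * y)) (Real.exp (2 * x) * 2) x :=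
      (Real.hasDerivAt_exp (2 * x)).comp x (by simpa using (hasDerivAt_id x).const_mul (2:ℝ))
    have := e1.add (e2.const_mul (4:ℝ))
    exact this.congr_deriv (by ring)
  have h2 := h1.sqrt (by positivity)
  have h3 : HasDerivAt (fun y : ℝ => Real.exp (2 * y)) (2 * Real.exp (2 * x)) x := by
    have := (Real.hasDerivAt_exp (2 * x)).comp x
      (by simpa using (hasDerivAt_id x).const_mul (2:ℝ))
    exact this.congr_deriv (by ring)
  exact (h2.sub h3).div_const 2

/-- Abstract algebraic identity. -/
lemma key_alg (G u g' : ℝ) (h1G : (1:ℝ) - G ≠ 0) (hgu : 2 * G + u ≠ 0)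
    (hq : G ^ 2 = u * (1 - G))
    (hg' : g' = ((4 * u ^ 2 + 8 * u) / (2 * (2 * G + u)) - 2 * u) / 2) :
    -(-g') / 2 - (1 / 2) * (-g' / (1 - G)) = G := by
  subst hg'
  field_simp
  linear_combination (16 * (G - 1)) * hq

lemma hasDerivAt_pH (x : ℝ) : HasDerivAt pH (gH x) x := by
  have hg := hasDerivAt_gH x
  have h1g : (1 : ℝ) - gH x ≠ 0 := by have := gH_lt_one x; linarith
  set g' := ((4 * Real.exp (4 * x) + 8 * Real.exp (2 * x)) /
      (2 * Real.sqrt (Real.exp (4 * x) + 4 * Real.exp (2 * x)))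
    - 2 * Real.exp (2 * x)) / 2 with hg'
  clear_value g'
  have hone : HasDerivAt (fun y => (1 : ℝ) - gH y) (-g') x := by
    exact ((hasDerivAt_const x (1:ℝ)).sub hg).congr_deriv (by ring)
  have hlog : HasDerivAt (fun y => Real.log (1 - gH y)) (-g' / (1 - gH x)) x :=
    hone.log h1g
  have hD : HasDerivAt pH (-(-g') / 2 - (1 / 2) * (-g' / (1 - gH x))) x := by
    have := ((hone.neg).div_const 2).sub (hlog.const_mul (1/2 : ℝ))
    exact this
  have hgu : 2 * gH x + Real.exp (2 * x) ≠ 0 := by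
    have := sqrt_pos' x
    rw [sqrt_eq_gH] at this
    linarith
  have hkey := key_alg (gH x) (Real.exp (2 * x)) g' h1g hgu (gH_quadratic x) ?_
  · rw [hkey] at hD; exact hD
  · rw [hg', sqrt_eq_gH, exp4]

/-- for `J > 0` and `h ∈ ℝ`, every maximizer of `m ↦ p̃(m,h,J)` over `ℝ`
lies in `(0,1)` and satisfies the consistency equation `m = g((2m−1)J + h)`. -/
theorem stmt14 (h J : ℝ) (hJ : 0 < J) (m : ℝ)
    (hm : ∀ m' : ℝ, pTilde m' h J ≤ pTilde m h J) :
    m ∈ Set.Ioo (0 : ℝ) 1 ∧ m = gH ((2 * m - 1) * J + h) := by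
  set ξ := (2 * m - 1) * J + h with hξ
  have hinner : HasDerivAt (fun m' : ℝ => (2 * m' - 1) * J + h) (2 * J) m := by
    have := ((((hasDerivAt_id m).const_mul (2:ℝ)).sub_const 1).mul_const J).add_const h
    simpa using this
  have hpH : HasDerivAt (fun m' : ℝ => pH ((2 * m' - 1) * J + h)) (gH ξ * (2 * J)) m :=
    by have := (hasDerivAt_pH ξ).comp m hinner; exact this
  have hquad : HasDerivAt (fun m' : ℝ => -J * m' ^ 2 + J / 2) (-J * (2 * m)) m := by
    have := ((hasDerivAt_pow 2 m).const_mul (-J)).add_const (J / 2)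
    exact this.congr_deriv (by push_cast; ring)
  have hTot : HasDerivAt (fun m' : ℝ => pTilde m' h J) (-J * (2 * m) + gH ξ * (2 * J)) m :=
    hquad.add hpH
  have hmax : IsLocalMax (fun m' : ℝ => pTilde m' h J) m :=
    Filter.Eventually.of_forall hm
  have hzero := hmax.hasDerivAt_eq_zero hTot
  have hfac : 2 * J * (gH ξ - m) = 0 := by linarith [hzero]
  have hmeq : m = gH ξ := by
    rcases mul_eq_zero.mp hfac with h1 | h1
    · exfalso; linarith
    · linarith
  exact ⟨⟨by rw [hmeq]; exact gH_pos ξ, by rw [hmeq]; exact gH_lt_one ξ⟩, hmeq⟩
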